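/- Let $X$ be a topological space such that every real-valued Baire-one function on $X$ is functionally $F_\sigma$-measurable for perfectly normal targets, let $(Y_n : n \in \omega)$ be a sequentially absorbing covering of a sequential space $Y$ by closed perfectly normal subspaces. Then every Baire-one map $f : X \to Y$ is functionally $F_\sigma$-measurable, i.e., $\mathrm{B}_1(X,Y) \subseteq \mathrm{K}_1(X,Y)$. -/

import Mathlib

universe u v

open Filter Topology Set

/-- In a normal space, a closed Gδ set is the zero set of a nonnegative
continuous real function. -/
lemma zeroFun_of_closed_gdelta {Z : Type*} [TopologicalSpace Z] [NormalSpace Z]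
    {C : Set Z} (hC : IsClosed C) (hGδ : IsGδ C) :
    ∃ w : Z → ℝ, Continuous w ∧ (∀ x, 0 ≤ w x) ∧ C = w ⁻¹' {0} := by
  obtain ⟨U, hUopen, hCU⟩ := isGδ_iff_eq_iInter_nat.mp hGδ
  have hsub : ∀ n, C ⊆ U n := fun n => hCU ▸ Set.iInter_subset U n
  have hfn : ∀ n : ℕ, ∃ f : C(Z, ℝ), EqOn f 0 C ∧ EqOn f 1 (U n)ᶜ ∧
      ∀ x, f x ∈ Icc (0:ℝ) 1 := fun n =>
    exists_continuous_zero_one_of_isClosed hC (hUopen n).isClosed_compl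
      (Set.disjoint_left.mpr fun x hx hx' => hx' (hsub n hx))
  choose f hf0 hf1 hf01 using hfn
  have hterm_nonneg : ∀ (n : ℕ) (x : Z), 0 ≤ (1/2:ℝ)^n * f n x := fun n x =>
    mul_nonneg (by positivity) (hf01 n x).1
  have hbound : ∀ (n : ℕ) (x : Z), ‖(1/2:ℝ)^n * f n x‖ ≤ (1/2:ℝ)^n := by
    intro n x
    rw [norm_mul, Real.norm_eq_abs, Real.norm_eq_abs,
      abs_of_nonneg (by positivity : (0:ℝ) ≤ (1/2:ℝ)^n)]
    have h1 : |f n x| ≤ 1 := abs_le.mpr ⟨by linarith [(hf01 n x).1], (hf01 n x).2⟩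
    calc (1/2:ℝ)^n * |f n x| ≤ (1/2:ℝ)^n * 1 :=
          mul_le_mul_of_nonneg_left h1 (by positivity)
      _ = (1/2:ℝ)^n := mul_one _
  have hsummable : ∀ x : Z, Summable fun n => (1/2:ℝ)^n * f n x := by
    intro x
    refine Summable.of_nonneg_of_le (fun n => hterm_nonneg n x) (fun n => ?_)
      summable_geometric_two
    calc (1/2:ℝ)^n * f n x ≤ |(1/2:ℝ)^n * f n x| := le_abs_self _
      _ ≤ (1/2:ℝ)^n := hbound n x
  refine ⟨fun x => ∑' n, (1/2:ℝ)^n * f n x, ?_, ?_, ?_⟩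
  · exact continuous_tsum (fun n => continuous_const.mul (f n).continuous)
      summable_geometric_two hbound
  · exact fun x => tsum_nonneg fun n => hterm_nonneg n x
  · ext x
    simp only [Set.mem_preimage, Set.mem_singleton_iff]
    constructor
    · intro hx
      have : ∀ n : ℕ, (1/2:ℝ)^n * f n x = 0 := fun n => by
        rw [hf0 n hx]; simp
      simp only [this, tsum_zero]
    · intro hx
      by_contra hxC
      have hxU : ∃ n, x ∉ U n := by
        by_contra h
        push_neg at h
        exact hxC (hCU ▸ Set.mem_iInter.mpr h)
      obtain ⟨n, hn⟩ := hxU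
      have hfn1 : f n x = 1 := hf1 n hn
      have hle : (1/2:ℝ)^n * f n x ≤ ∑' m, (1/2:ℝ)^m * f m x :=
        Summable.le_tsum (hsummable x) n (fun j _ => hterm_nonneg j x)
      rw [hfn1, mul_one, hx] at hle
      exact absurd hle (not_le.mpr (by positivity))

/-- Zero functions on a closed subset of a perfectly normal subtype. -/
lemma subzero_aux {Y : Type*} [TopologicalSpace Y] {S : Set Y}
    (hpn : PerfectlyNormalSpace S) {C : Set Y} (hC : IsClosed C) :
    ∃ w : S → ℝ, Continuous w ∧ (∀ x, 0 ≤ w x) ∧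
      (Subtype.val ⁻¹' C : Set S) = w ⁻¹' {0} := by
  haveI := hpn
  have hCc : IsClosed (Subtype.val ⁻¹' C : Set S) := hC.preimage continuous_subtype_val
  exact zeroFun_of_closed_gdelta hCc (PerfectlyNormalSpace.closed_gdelta hCc)

/-- Induction step: extend a relative zero function of `F` from `Yn` to `Yn'`. -/
lemma step_aux {Y : Type*} [TopologicalSpace Y] {Yn Yn' F : Set Y}
    (hsub : Yn ⊆ Yn') (hYncl : IsClosed Yn) (hF : IsClosed F)
    (hpn' : PerfectlyNormalSpace Yn')
    {z : Y → ℝ} (hzc : ContinuousOn z Yn) (hz0 : ∀ y ∈ Yn, 0 ≤ z y)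
    (hzF : ∀ y ∈ Yn, (z y = 0 ↔ y ∈ F)) :
    ∃ z' : Y → ℝ, ContinuousOn z' Yn' ∧ (∀ y ∈ Yn', 0 ≤ z' y) ∧
      (∀ y ∈ Yn', (z' y = 0 ↔ y ∈ F)) ∧ EqOn z' z Yn := by
  classical
  haveI := hpn'
  haveI : NormalSpace Yn' := hpn'.toNormalSpace
  set A : Set Yn' := Subtype.val ⁻¹' Yn with hA
  have hAcl : IsClosed A := hYncl.preimage continuous_subtype_val
  obtain ⟨w, hwc, hw0, hwz⟩ := subzero_aux hpn' hF
  obtain ⟨p, hpc, hp0, hpz⟩ := subzero_aux hpn' hYncl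
  have hwmem : ∀ x : Yn', (x : Y) ∈ F ↔ w x = 0 := by
    intro x
    constructor
    · intro hx; have : x ∈ (Subtype.val ⁻¹' F : Set Yn') := hx
      rwa [hwz] at this
    · intro hx; have : x ∈ (w ⁻¹' {0}) := hx
      rw [← hwz] at this; exact this
  have hpmem : ∀ x : Yn', (x : Y) ∈ Yn ↔ p x = 0 := by
    intro x
    constructor
    · intro hx; have : x ∈ (Subtype.val ⁻¹' Yn : Set Yn') := hx
      rwa [hpz] at this
    · intro hx; have : x ∈ (p ⁻¹' {0}) := hx
      rw [← hpz] at this; exact this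
  -- Tietze extension of z ∘ val from A, with values in Ici 0
  have hfc : Continuous fun a : A => z ((a : Yn') : Y) := by
    refine hzc.comp_continuous (continuous_subtype_val.comp continuous_subtype_val) ?_
    exact fun a => a.2
  obtain ⟨E, hE0, hEeq⟩ := ContinuousMap.exists_restrict_eq_forall_mem_of_closed
    (⟨fun a : A => z ((a : Yn') : Y), hfc⟩ : C(A, ℝ)) (t := Ici 0)
    (fun a => hz0 _ a.2) ⟨0, Set.self_mem_Ici⟩ hAcl
  have hE0' : ∀ x : Yn', 0 ≤ E x := fun x => hE0 x
  have he : ∀ (x : Yn'), x ∈ A → E x = z (x : Y) := by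
    intro x hx
    have := congrArg (fun g => ContinuousMap.toFun g ⟨x, hx⟩) hEeq
    simpa using this
  -- the correction function q
  set q : Yn' → ℝ := fun x => if w x + p x = 0 then 0 else E x * w x / (w x + p x) with hq
  have hq0 : ∀ x, 0 ≤ q x := by
    intro x
    simp only [hq]
    split
    · exact le_refl 0
    · exact div_nonneg (mul_nonneg (hE0' x) (hw0 x)) (add_nonneg (hw0 x) (hp0 x))
  have hqbound : ∀ x, q x ≤ E x := by
    intro x
    simp only [hq]
    by_cases h : w x + p x = 0
    · rw [if_pos h]; exact hE0' x
    rw [if_neg h]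
    have hpos : 0 < w x + p x :=
      lt_of_le_of_ne (add_nonneg (hw0 x) (hp0 x)) (Ne.symm h)
    rw [div_le_iff₀ hpos]
    exact mul_le_mul_of_nonneg_left (le_add_of_nonneg_right (hp0 x)) (hE0' x)
  have hqc : Continuous q := by
    rw [continuous_iff_continuousAt]
    intro x
    by_cases hx : w x + p x = 0
    · have hwx : w x = 0 := le_antisymm (by linarith [hp0 x, hw0 x]) (hw0 x)
      have hpx : p x = 0 := le_antisymm (by linarith [hp0 x, hw0 x]) (hp0 x)
      have hxYn : (x : Y) ∈ Yn := (hpmem x).mpr hpx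
      have hxF : (x : Y) ∈ F := (hwmem x).mpr hwx
      have hEx : E x = 0 := by
        rw [he x hxYn]
        exact (hzF _ hxYn).mpr hxF
      have htend : Tendsto q (𝓝 x) (𝓝 0) := by
        refine squeeze_zero hq0 hqbound ?_
        have h1 : Tendsto (⇑E) (𝓝 x) (𝓝 (E x)) := E.continuous.continuousAt
        rwa [hEx] at h1
      have hqx : q x = 0 := by simp only [hq, if_pos hx]
      unfold ContinuousAt
      rwa [hqx]
    · have hopen : IsOpen {t : Yn' | w t + p t ≠ 0} := by
        have : IsOpen ((fun t => w t + p t) ⁻¹' ({0}ᶜ)) :=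
          (isOpen_compl_singleton).preimage (hwc.add hpc)
        exact this
      have hca : ContinuousAt (fun t => E t * w t / (w t + p t)) x :=
        ((E.continuous.continuousAt.mul hwc.continuousAt).div
          (hwc.continuousAt.add hpc.continuousAt) hx)
      refine hca.congr ?_
      filter_upwards [hopen.mem_nhds hx] with t ht
      simp only [hq, if_neg ht]
  -- the new function on the subtype
  set u : Yn' → ℝ := fun x => q x + w x * p x with hu
  have huc : Continuous u := hqc.add (hwc.mul hpc)
  have hu0 : ∀ x, 0 ≤ u x := fun x =>
    add_nonneg (hq0 x) (mul_nonneg (hw0 x) (hp0 x))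
  have huA : ∀ x : Yn', (x : Y) ∈ Yn → u x = z (x : Y) := by
    intro x hx
    have hpx : p x = 0 := (hpmem x).mp hx
    have hux : u x = q x := by
      show q x + w x * p x = q x
      rw [hpx, mul_zero, add_zero]
    rw [hux]
    show (if w x + p x = 0 then 0 else E x * w x / (w x + p x)) = z (x : Y)
    rw [hpx, add_zero]
    by_cases hwx : w x = 0
    · rw [if_pos hwx]
      have hxF : (x : Y) ∈ F := (hwmem x).mpr hwx
      exact ((hzF _ hx).mpr hxF).symm
    · rw [if_neg hwx, mul_div_assoc, div_self hwx, mul_one]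
      exact he x hx
  have huzero : ∀ x : Yn', (u x = 0 ↔ (x : Y) ∈ F) := by
    intro x
    constructor
    · intro hux
      have hux' : q x + w x * p x = 0 := hux
      have h1 : q x = 0 := le_antisymm
        (by linarith [mul_nonneg (hw0 x) (hp0 x)]) (hq0 x)
      have h2 : w x * p x = 0 := by linarith
      rcases mul_eq_zero.mp h2 with hwx | hpx
      · exact (hwmem x).mpr hwx
      · have hxYn : (x : Y) ∈ Yn := (hpmem x).mpr hpx
        have h3 := huA x hxYn
        rw [hux] at h3
        exact (hzF _ hxYn).mp h3.symm
    · intro hxF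
      have hwx : w x = 0 := (hwmem x).mp hxF
      have hq' : q x = 0 := by simp [hq, hwx]
      show q x + w x * p x = 0
      rw [hq', hwx, zero_mul, add_zero]
  refine ⟨fun y => if h : y ∈ Yn' then u ⟨y, h⟩ else 1, ?_, ?_, ?_, ?_⟩
  · rw [continuousOn_iff_continuous_restrict]
    have : (Yn'.domRestrict fun y => if h : y ∈ Yn' then u ⟨y, h⟩ else 1) = u := by
      funext x
      simp only [Set.domRestrict_apply, dif_pos x.2]
    rw [this]
    exact huc
  · intro y hy
    show 0 ≤ if h : y ∈ Yn' then u ⟨y, h⟩ else 1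
    rw [dif_pos hy]
    exact hu0 _
  · intro y hy
    show (if h : y ∈ Yn' then u ⟨y, h⟩ else 1) = 0 ↔ y ∈ F
    rw [dif_pos hy]
    exact huzero ⟨y, hy⟩
  · intro y hy
    have hy' : y ∈ Yn' := hsub hy
    show (if h : y ∈ Yn' then u ⟨y, h⟩ else 1) = z y
    rw [dif_pos hy']
    exact huA ⟨y, hy'⟩ hy

/-- `f` is of the first Baire class: a pointwise limit of continuous maps. -/
def BaireOne {X Y : Type*} [TopologicalSpace X] [TopologicalSpace Y]
    (f : X → Y) : Prop :=
  ∃ g : ℕ → X → Y, (∀ n, Continuous (g n)) ∧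
    ∀ x, Tendsto (fun n => g n x) atTop (𝓝 (f x))

/-- A zero set: the preimage of `{0}` under a continuous real-valued function. -/
def IsZeroSet {X : Type*} [TopologicalSpace X] (A : Set X) : Prop :=
  ∃ h : X → ℝ, Continuous h ∧ A = h ⁻¹' {0}

/-- `f` is functionally `F_σ`-measurable: preimages of open sets are countable
unions of zero sets. -/
def FunctionallyFSigmaMeasurable {X Y : Type*} [TopologicalSpace X]
    [TopologicalSpace Y] (f : X → Y) : Prop :=
  ∀ V : Set Y, IsOpen V →
    ∃ Z : ℕ → Set X, (∀ n, IsZeroSet (Z n)) ∧ f ⁻¹' V = ⋃ n, Z n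

theorem baireOne_subset_functionallyFSigma
    {X : Type u} {Y : Type v} [TopologicalSpace X] [TopologicalSpace Y]
    [SequentialSpace Y]
    (hX : ∀ (Z : Type v) [TopologicalSpace Z], PerfectlyNormalSpace Z →
      ∀ g : X → Z, BaireOne g → FunctionallyFSigmaMeasurable g)
    (Yn : ℕ → Set Y)
    (hcover : (⋃ n, Yn n) = Set.univ)
    (hclosed : ∀ n, IsClosed (Yn n))
    (hmono : Monotone Yn)
    (habs : ∀ (u : ℕ → Y) (y : Y), Tendsto u atTop (𝓝 y) →
      ∃ k, ∀ n, u n ∈ Yn k)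
    (hpn : ∀ n, PerfectlyNormalSpace (Yn n)) :
    ∀ f : X → Y, BaireOne f → FunctionallyFSigmaMeasurable f := by
  classical
  -- Step 1: the topology of `Y` is coherent with the cover.
  have coh : ∀ A : Set Y, (∀ n, IsClosed (Subtype.val ⁻¹' A : Set (Yn n))) →
      IsClosed A := by
    intro A hA
    refine IsSeqClosed.isClosed ?_
    intro u y hu huy
    obtain ⟨k, hk⟩ := habs u y huy
    have hyk : y ∈ Yn k :=
      (hclosed k).mem_of_tendsto huy (Filter.Eventually.of_forall hk)
    have hlift : Tendsto (fun n => (⟨u n, hk n⟩ : Yn k)) atTop (𝓝 ⟨y, hyk⟩) := by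
      rw [tendsto_subtype_rng]
      exact huy
    exact (hA k).mem_of_tendsto hlift
      (Filter.Eventually.of_forall fun n => (hu n : u n ∈ A))
  -- Step 2: continuity from continuity on pieces.
  have contOfPieces : ∀ h : Y → ℝ, (∀ n, ContinuousOn h (Yn n)) → Continuous h := by
    intro h hh
    rw [continuous_iff_isClosed]
    intro C hCcl
    refine coh _ fun n => ?_
    exact hCcl.preimage (continuousOn_iff_continuous_restrict.mp (hh n))
  -- Step 3: every closed set in `Y` is a zero set of a nonnegative function.
  have main : ∀ F : Set Y, IsClosed F →
      ∃ h : Y → ℝ, Continuous h ∧ (∀ y, 0 ≤ h y) ∧ F = h ⁻¹' {0} := by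
    intro F hF
    set P : ℕ → (Y → ℝ) → Prop := fun n z =>
      ContinuousOn z (Yn n) ∧ (∀ y ∈ Yn n, 0 ≤ z y) ∧
        ∀ y ∈ Yn n, (z y = 0 ↔ y ∈ F) with hPdef
    have base : ∃ z : Y → ℝ, P 0 z := by
      obtain ⟨w, hwc, hw0, hwz⟩ := subzero_aux (hpn 0) hF
      refine ⟨fun y => if h : y ∈ Yn 0 then w ⟨y, h⟩ else 1, ?_, ?_, ?_⟩
      · rw [continuousOn_iff_continuous_restrict]
        have hres : ((Yn 0).domRestrict fun y => if h : y ∈ Yn 0 then w ⟨y, h⟩ else 1)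
            = w := by
          funext x
          simp only [Set.domRestrict_apply, dif_pos x.2]
        rw [hres]
        exact hwc
      · intro y hy
        show 0 ≤ if h : y ∈ Yn 0 then w ⟨y, h⟩ else 1
        rw [dif_pos hy]
        exact hw0 _
      · intro y hy
        show (if h : y ∈ Yn 0 then w ⟨y, h⟩ else 1) = 0 ↔ y ∈ F
        rw [dif_pos hy]
        constructor
        · intro h0
          have : (⟨y, hy⟩ : Yn 0) ∈ (w ⁻¹' {0}) := h0
          rw [← hwz] at this
          exact this
        · intro hyF
          have : (⟨y, hy⟩ : Yn 0) ∈ (Subtype.val ⁻¹' F : Set (Yn 0)) := hyF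
          rw [hwz] at this
          exact this
    have step : ∀ (n : ℕ) (z : Y → ℝ), P n z →
        ∃ z' : Y → ℝ, P (n+1) z' ∧ Set.EqOn z' z (Yn n) := by
      intro n z hz
      obtain ⟨z', h1, h2, h3, h4⟩ := step_aux (hmono (Nat.le_succ n)) (hclosed n)
        hF (hpn (n+1)) hz.1 hz.2.1 hz.2.2
      exact ⟨z', ⟨h1, h2, h3⟩, h4⟩
    obtain ⟨z0, hz0⟩ := base
    choose stepf hstepP hstepE using step
    let seq : ∀ n : ℕ, {z : Y → ℝ // P n z} := fun n =>
      Nat.rec ⟨z0, hz0⟩ (fun m pr => ⟨stepf m pr.1 pr.2, hstepP m pr.1 pr.2⟩) n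
    have hseq : ∀ n, Set.EqOn (seq (n+1)).1 (seq n).1 (Yn n) := fun n =>
      hstepE n (seq n).1 (seq n).2
    have hmono' : ∀ {n m : ℕ}, n ≤ m → Set.EqOn (seq m).1 (seq n).1 (Yn n) := by
      intro n m h
      induction h with
      | refl => exact fun y _ => rfl
      | @step k hk ih =>
        intro y hy
        exact ((hseq k) (hmono hk hy)).trans (ih hy)
    have ex : ∀ y : Y, ∃ n, y ∈ Yn n := fun y =>
      Set.mem_iUnion.mp (hcover ▸ Set.mem_univ y)
    choose idx hidx using ex
    have key : ∀ (n : ℕ) (y : Y), y ∈ Yn n → (seq (idx y)).1 y = (seq n).1 y := by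
      intro n y hy
      calc (seq (idx y)).1 y = (seq (max n (idx y))).1 y :=
            (hmono' (le_max_right _ _) (hidx y)).symm
        _ = (seq n).1 y := hmono' (le_max_left _ _) hy
    refine ⟨fun y => (seq (idx y)).1 y, ?_, ?_, ?_⟩
    · apply contOfPieces
      intro n
      exact ((seq n).2.1).congr (fun y hy => key n y hy)
    · intro y
      exact (seq (idx y)).2.2.1 y (hidx y)
    · ext y
      simp only [Set.mem_preimage, Set.mem_singleton_iff]
      exact ((seq (idx y)).2.2.2 y (hidx y)).symm
  -- Step 4: `Y` is perfectly normal.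
  have hYnormal : NormalSpace Y := by
    constructor
    intro s t hs ht hd
    obtain ⟨a, hac, ha0, haz⟩ := main s hs
    obtain ⟨b, hbc, hb0, hbz⟩ := main t ht
    refine ⟨{y | a y < b y}, {y | b y < a y}, isOpen_lt hac hbc, isOpen_lt hbc hac,
      ?_, ?_, ?_⟩
    · intro y hy
      have ha : a y = 0 := by
        have : y ∈ a ⁻¹' {0} := haz ▸ hy
        exact this
      have hb : b y ≠ 0 := by
        intro h0
        have : y ∈ t := by
          have : y ∈ b ⁻¹' {0} := h0
          rw [← hbz] at this
          exact this
        exact Set.disjoint_left.mp hd hy this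
      show a y < b y
      rw [ha]
      exact lt_of_le_of_ne (hb0 y) (Ne.symm hb)
    · intro y hy
      have hb : b y = 0 := by
        have : y ∈ b ⁻¹' {0} := hbz ▸ hy
        exact this
      have ha : a y ≠ 0 := by
        intro h0
        have : y ∈ s := by
          have : y ∈ a ⁻¹' {0} := h0
          rw [← haz] at this
          exact this
        exact Set.disjoint_left.mp hd.symm hy this
      show b y < a y
      rw [hb]
      exact lt_of_le_of_ne (ha0 y) (Ne.symm ha)
    · exact Set.disjoint_left.mpr fun y h1 h2 =>
        lt_asymm (show a y < b y from h1) (show b y < a y from h2)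
  haveI := hYnormal
  have hYpn : PerfectlyNormalSpace Y := by
    refine { toNormalSpace := hYnormal, closed_gdelta := ?_ }
    intro F hFcl
    obtain ⟨h, hc, h0, hz⟩ := main F hFcl
    rw [hz]
    rw [isGδ_iff_eq_iInter_nat]
    refine ⟨fun n => h ⁻¹' (Metric.ball 0 (1/(n+1))), fun n =>
      Metric.isOpen_ball.preimage hc, ?_⟩
    ext y
    simp only [Set.mem_preimage, Set.mem_singleton_iff, Set.mem_iInter,
      Metric.mem_ball, Real.dist_eq, sub_zero]
    constructor
    · intro hy n
      rw [hy, abs_zero]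
      positivity
    · intro hy
      by_contra hne
      have habs' : 0 < |h y| := abs_pos.mpr hne
      obtain ⟨n, hn⟩ := exists_nat_one_div_lt habs'
      exact absurd (hy n) (not_lt.mpr (le_of_lt hn))
  exact fun f hf => hX Y hYpn f hf
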